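/- Let A, B be nonempty compact subsets of ℝ^d. Then λ(A+B)^{1/d} ≥ λ(A)^{1/d} + λ(B)^{1/d}, where λ is d-dimensional Lebesgue measure and A+B is the Minkowski sum. -/

import Mathlib

open MeasureTheory Pointwise

open MeasureTheory Pointwise Set
open scoped Classical ENNReal

namespace BM

variable {d : ℕ}


variable {d : ℕ}

def bx (p : (Fin d → ℝ) × (Fin d → ℝ)) : Set (Fin d → ℝ) :=
  univ.pi fun i => Ioo (p.1 i) (p.2 i)

def Nice (p : (Fin d → ℝ) × (Fin d → ℝ)) : Prop := ∀ i, p.1 i < p.2 i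

lemma measurableSet_bx (p : (Fin d → ℝ) × (Fin d → ℝ)) : MeasurableSet (bx p) :=
  MeasurableSet.univ_pi fun _ => measurableSet_Ioo

lemma isOpen_bx (p : (Fin d → ℝ) × (Fin d → ℝ)) : IsOpen (bx p) :=
  isOpen_set_pi finite_univ fun _ _ => isOpen_Ioo

lemma bx_nonempty {p : (Fin d → ℝ) × (Fin d → ℝ)} (hp : Nice p) : (bx p).Nonempty :=
  univ_pi_nonempty_iff.2 fun i => nonempty_Ioo.2 (hp i)

lemma bx_eq_empty {p : (Fin d → ℝ) × (Fin d → ℝ)} (hp : ¬ Nice p) : bx p = ∅ := by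
  rw [← not_nonempty_iff_eq_empty]
  intro h
  exact hp fun i => nonempty_Ioo.1 ((univ_pi_nonempty_iff.1 h) i)

lemma volume_bx (p : (Fin d → ℝ) × (Fin d → ℝ)) :
    volume (bx p) = ∏ i, ENNReal.ofReal (p.2 i - p.1 i) := by
  rw [bx, volume_pi_pi]
  simp [Real.volume_Ioo]

lemma volume_bx_toReal {p : (Fin d → ℝ) × (Fin d → ℝ)} (hp : Nice p) :
    (volume (bx p)).toReal = ∏ i, (p.2 i - p.1 i) := by
  rw [volume_bx, ENNReal.toReal_prod]
  exact Finset.prod_congr rfl fun i _ => ENNReal.toReal_ofReal (by linarith [hp i])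

lemma volume_bx_lt_top (p : (Fin d → ℝ) × (Fin d → ℝ)) : volume (bx p) < ⊤ := by
  rw [volume_bx]
  exact ENNReal.prod_lt_top fun i _ => ENNReal.ofReal_lt_top

lemma volume_bx_pos {p : (Fin d → ℝ) × (Fin d → ℝ)} (hp : Nice p) : 0 < volume (bx p) := by
  rw [volume_bx]
  refine CanonicallyOrderedAdd.prod_pos.2 fun i _ => ?_
  rw [ENNReal.ofReal_pos]
  linarith [hp i]

lemma Ioo_add_Ioo' (a b c e : ℝ) (h1 : a < b) (h2 : c < e) :
    Ioo a b + Ioo c e = Ioo (a + c) (b + e) := by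
  apply Subset.antisymm
  · rintro x ⟨u, hu, v, hv, rfl⟩
    exact ⟨add_lt_add hu.1 hv.1, add_lt_add hu.2 hv.2⟩
  · rintro x ⟨hx1, hx2⟩
    obtain ⟨u, hu⟩ : (Ioo (max a (x - e)) (min b (x - c))).Nonempty := by
      refine nonempty_Ioo.2 ?_
      simp only [max_lt_iff, lt_min_iff]
      constructor <;> constructor <;> linarith
    simp only [mem_Ioo, max_lt_iff, lt_min_iff] at hu
    exact ⟨u, ⟨hu.1.1, hu.2.1⟩, x - u, ⟨by linarith [hu.2.2], by linarith [hu.1.2]⟩, by ring⟩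

lemma bx_add_bx {p q : (Fin d → ℝ) × (Fin d → ℝ)} (hp : Nice p) (hq : Nice q) :
    bx p + bx q = bx (p.1 + q.1, p.2 + q.2) := by
  apply Subset.antisymm
  · rintro x ⟨a, ha, b, hb, rfl⟩ i _
    have h1 := ha i (mem_univ i); have h2 := hb i (mem_univ i)
    simp only [mem_Ioo] at *
    exact ⟨add_lt_add h1.1 h2.1, add_lt_add h1.2 h2.2⟩
  · intro x hx
    have : ∀ i, ∃ a ∈ Ioo (p.1 i) (p.2 i), ∃ b ∈ Ioo (q.1 i) (q.2 i), x i = a + b := by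
      intro i
      have hxi : x i ∈ Ioo (p.1 i + q.1 i) (p.2 i + q.2 i) := hx i (mem_univ i)
      rw [← Ioo_add_Ioo' _ _ _ _ (hp i) (hq i)] at hxi
      obtain ⟨a, ha, b, hb, hab⟩ := hxi
      exact ⟨a, ha, b, hb, hab.symm⟩
    choose a ha b hb hab using this
    exact ⟨a, fun i _ => ha i, b, fun i _ => hb i, by ext i; exact (hab i).symm⟩


section AMGM


lemma amgm_boxes {d : ℕ} (hd : 0 < d) (u v : Fin d → ℝ) (hu : ∀ i, 0 < u i)
    (hv : ∀ i, 0 < v i) :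
    (∏ i, u i) ^ ((1:ℝ)/d) + (∏ i, v i) ^ ((1:ℝ)/d) ≤ (∏ i, (u i + v i)) ^ ((1:ℝ)/d) := by
  have hd' : (0:ℝ) < d := Nat.cast_pos.2 hd
  have hP : (0:ℝ) < ∏ i, (u i + v i) := Finset.prod_pos fun i _ => by linarith [hu i, hv i]
  have key : ∀ w : Fin d → ℝ, (∀ i, 0 < w i) → (∀ i, w i ≤ u i + v i) →
      (∏ i, w i) ^ ((1:ℝ)/d) / (∏ i, (u i + v i)) ^ ((1:ℝ)/d) ≤
        (1/d) * ∑ i, w i / (u i + v i) := by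
    intro w hw hle
    have h1 : (∏ i, w i) ^ ((1:ℝ)/d) / (∏ i, (u i + v i)) ^ ((1:ℝ)/d)
        = ∏ i, (w i / (u i + v i)) ^ ((1:ℝ)/d) := by
      rw [Real.finset_prod_rpow _ _ (fun i _ => div_nonneg (hw i).le (by linarith [hu i, hv i])),
        Finset.prod_div_distrib, Real.div_rpow (Finset.prod_nonneg fun i _ => (hw i).le) hP.le]
    rw [h1, Finset.mul_sum]
    have := Real.geom_mean_le_arith_mean_weighted Finset.univ (fun _ => (1:ℝ)/d)
      (fun i => w i / (u i + v i)) (fun i _ => by positivity)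
      (by simp [Finset.card_univ]; field_simp)
      (fun i _ => div_nonneg (hw i).le (by linarith [hu i, hv i]))
    simpa using this
  have hsum : ∑ i : Fin d, (u i / (u i + v i) + v i / (u i + v i)) = d := by
    have : ∀ i : Fin d, u i / (u i + v i) + v i / (u i + v i) = 1 := fun i => by
      rw [← add_div, div_self (by linarith [hu i, hv i])]
    simp [this]
  have h2 := key u hu (fun i => by linarith [hv i])
  have h3 := key v hv (fun i => by linarith [hu i])
  have hPr : (0:ℝ) < (∏ i, (u i + v i)) ^ ((1:ℝ)/d) := Real.rpow_pos_of_pos hP _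
  have h4 : (∏ i, u i) ^ ((1:ℝ)/d) / (∏ i, (u i + v i)) ^ ((1:ℝ)/d)
      + (∏ i, v i) ^ ((1:ℝ)/d) / (∏ i, (u i + v i)) ^ ((1:ℝ)/d) ≤ 1 := by
    have : (1/(d:ℝ)) * ∑ i, u i / (u i + v i) + (1/(d:ℝ)) * ∑ i, v i / (u i + v i) = 1 := by
      rw [← mul_add, ← Finset.sum_add_distrib, hsum]
      field_simp
    linarith
  rw [← add_div, div_le_one hPr] at h4
  exact h4

end AMGM
-- families
def famSet (𝒜 : Finset ((Fin d → ℝ) × (Fin d → ℝ))) : Set (Fin d → ℝ) := ⋃ p ∈ 𝒜, bx p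

structure Good (𝒜 : Finset ((Fin d → ℝ) × (Fin d → ℝ))) : Prop where
  ne : 𝒜.Nonempty
  nice : ∀ p ∈ 𝒜, Nice p
  disj : (↑𝒜 : Set ((Fin d → ℝ) × (Fin d → ℝ))).Pairwise fun p q => Disjoint (bx p) (bx q)

lemma isOpen_famSet (𝒜 : Finset ((Fin d → ℝ) × (Fin d → ℝ))) : IsOpen (famSet 𝒜) :=
  isOpen_biUnion fun p _ => isOpen_bx p

lemma measurableSet_famSet (𝒜 : Finset ((Fin d → ℝ) × (Fin d → ℝ))) :
    MeasurableSet (famSet 𝒜) := (isOpen_famSet 𝒜).measurableSet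

lemma volume_famSet_eq_sum {𝒜 : Finset ((Fin d → ℝ) × (Fin d → ℝ))} (h : Good 𝒜) :
    volume (famSet 𝒜) = ∑ p ∈ 𝒜, volume (bx p) :=
  measure_biUnion_finset h.disj fun p _ => measurableSet_bx p

lemma volume_famSet_lt_top (𝒜 : Finset ((Fin d → ℝ) × (Fin d → ℝ))) :
    volume (famSet 𝒜) < ⊤ :=
  lt_of_le_of_lt (measure_biUnion_finset_le 𝒜 bx)
    (ENNReal.sum_lt_top.2 fun p _ => volume_bx_lt_top p)

lemma volume_famSet_pos {𝒜 : Finset ((Fin d → ℝ) × (Fin d → ℝ))} (h : Good 𝒜) :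
    0 < volume (famSet 𝒜) := by
  obtain ⟨p, hp⟩ := h.ne
  calc (0:ℝ≥0∞) < volume (bx p) := by
        rw [volume_bx]
        refine CanonicallyOrderedAdd.prod_pos.2 fun i _ => ?_
        rw [ENNReal.ofReal_pos]; linarith [h.nice p hp i]
    _ ≤ volume (famSet 𝒜) := measure_mono (subset_biUnion_of_mem hp)

-- cuts
def cutL (i : Fin d) (c : ℝ) (p : (Fin d → ℝ) × (Fin d → ℝ)) : (Fin d → ℝ) × (Fin d → ℝ) :=
  (p.1, Function.update p.2 i (min (p.2 i) c))

def cutR (i : Fin d) (c : ℝ) (p : (Fin d → ℝ) × (Fin d → ℝ)) : (Fin d → ℝ) × (Fin d → ℝ) :=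
  (Function.update p.1 i (max (p.1 i) c), p.2)

lemma bx_cutL (i : Fin d) (c : ℝ) (p : (Fin d → ℝ) × (Fin d → ℝ)) :
    bx (cutL i c p) = bx p ∩ {x | x i < c} := by
  ext x
  simp only [bx, cutL, mem_pi, mem_univ, forall_true_left, mem_inter_iff, mem_setOf_eq, mem_Ioo]
  constructor
  · intro h
    have hi := h i
    rw [Function.update_self] at hi
    refine ⟨fun j => ?_, (lt_min_iff.1 hi.2).2⟩
    rcases eq_or_ne j i with rfl | hj
    · exact ⟨hi.1, (lt_min_iff.1 hi.2).1⟩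
    · have := h j; rwa [Function.update_of_ne hj] at this
  · rintro ⟨h1, h2⟩ j
    rcases eq_or_ne j i with rfl | hj
    · rw [Function.update_self]
      exact ⟨(h1 j).1, lt_min_iff.2 ⟨(h1 j).2, h2⟩⟩
    · rw [Function.update_of_ne hj]; exact h1 j

lemma bx_cutR (i : Fin d) (c : ℝ) (p : (Fin d → ℝ) × (Fin d → ℝ)) :
    bx (cutR i c p) = bx p ∩ {x | c < x i} := by
  ext x
  simp only [bx, cutR, mem_pi, mem_univ, forall_true_left, mem_inter_iff, mem_setOf_eq, mem_Ioo]
  constructor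
  · intro h
    have hi := h i
    rw [Function.update_self] at hi
    refine ⟨fun j => ?_, (max_lt_iff.1 hi.1).2⟩
    rcases eq_or_ne j i with rfl | hj
    · exact ⟨(max_lt_iff.1 hi.1).1, hi.2⟩
    · have := h j; rwa [Function.update_of_ne hj] at this
  · rintro ⟨h1, h2⟩ j
    rcases eq_or_ne j i with rfl | hj
    · rw [Function.update_self]
      exact ⟨max_lt_iff.2 ⟨(h1 j).1, h2⟩, (h1 j).2⟩
    · rw [Function.update_of_ne hj]; exact h1 j

noncomputable def famL (i : Fin d) (c : ℝ) (𝒜 : Finset ((Fin d → ℝ) × (Fin d → ℝ))) :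
    Finset ((Fin d → ℝ) × (Fin d → ℝ)) := (𝒜.image (cutL i c)).filter Nice

noncomputable def famR (i : Fin d) (c : ℝ) (𝒜 : Finset ((Fin d → ℝ) × (Fin d → ℝ))) :
    Finset ((Fin d → ℝ) × (Fin d → ℝ)) := (𝒜.image (cutR i c)).filter Nice

lemma famSet_famL (i : Fin d) (c : ℝ) (𝒜 : Finset ((Fin d → ℝ) × (Fin d → ℝ))) :
    famSet (famL i c 𝒜) = famSet 𝒜 ∩ {x | x i < c} := by
  ext x
  simp only [famSet, famL, mem_iUnion, Finset.mem_filter, Finset.mem_image, exists_prop,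
    mem_inter_iff, mem_setOf_eq]
  constructor
  · rintro ⟨q, ⟨⟨p, hp, rfl⟩, -⟩, hx⟩
    rw [bx_cutL] at hx
    exact ⟨⟨p, hp, hx.1⟩, hx.2⟩
  · rintro ⟨⟨p, hp, hx⟩, hxi⟩
    refine ⟨cutL i c p, ⟨⟨p, hp, rfl⟩, ?_⟩, by rw [bx_cutL]; exact ⟨hx, hxi⟩⟩
    by_contra hn
    have := bx_eq_empty hn
    rw [bx_cutL] at this
    exact absurd this (Nonempty.ne_empty ⟨x, hx, hxi⟩)

lemma famSet_famR (i : Fin d) (c : ℝ) (𝒜 : Finset ((Fin d → ℝ) × (Fin d → ℝ))) :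
    famSet (famR i c 𝒜) = famSet 𝒜 ∩ {x | c < x i} := by
  ext x
  simp only [famSet, famR, mem_iUnion, Finset.mem_filter, Finset.mem_image, exists_prop,
    mem_inter_iff, mem_setOf_eq]
  constructor
  · rintro ⟨q, ⟨⟨p, hp, rfl⟩, -⟩, hx⟩
    rw [bx_cutR] at hx
    exact ⟨⟨p, hp, hx.1⟩, hx.2⟩
  · rintro ⟨⟨p, hp, hx⟩, hxi⟩
    refine ⟨cutR i c p, ⟨⟨p, hp, rfl⟩, ?_⟩, by rw [bx_cutR]; exact ⟨hx, hxi⟩⟩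
    by_contra hn
    have := bx_eq_empty hn
    rw [bx_cutR] at this
    exact absurd this (Nonempty.ne_empty ⟨x, hx, hxi⟩)

lemma good_famL {𝒜 : Finset ((Fin d → ℝ) × (Fin d → ℝ))} (h : Good 𝒜) {i : Fin d} {c : ℝ}
    (hne : (famSet 𝒜 ∩ {x | x i < c}).Nonempty) : Good (famL i c 𝒜) := by
  refine ⟨?_, fun p hp => (Finset.mem_filter.1 hp).2, ?_⟩
  · obtain ⟨x, hx⟩ := hne
    rw [← famSet_famL] at hx
    obtain ⟨_, hq, _⟩ := mem_iUnion₂.1 hx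
    exact ⟨_, hq⟩
  · intro q1 hq1 q2 hq2 hne'
    simp only [Finset.coe_filter, mem_setOf_eq, famL, Finset.mem_image] at hq1 hq2
    obtain ⟨⟨p1, hp1, rfl⟩, -⟩ := hq1
    obtain ⟨⟨p2, hp2, rfl⟩, -⟩ := hq2
    have hp12 : p1 ≠ p2 := fun h' => hne' (by rw [h'])
    have := h.disj hp1 hp2 hp12
    rw [bx_cutL, bx_cutL]
    exact this.mono inter_subset_left inter_subset_left

lemma good_famR {𝒜 : Finset ((Fin d → ℝ) × (Fin d → ℝ))} (h : Good 𝒜) {i : Fin d} {c : ℝ}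
    (hne : (famSet 𝒜 ∩ {x | c < x i}).Nonempty) : Good (famR i c 𝒜) := by
  refine ⟨?_, fun p hp => (Finset.mem_filter.1 hp).2, ?_⟩
  · obtain ⟨x, hx⟩ := hne
    rw [← famSet_famR] at hx
    obtain ⟨_, hq, _⟩ := mem_iUnion₂.1 hx
    exact ⟨_, hq⟩
  · intro q1 hq1 q2 hq2 hne'
    simp only [Finset.coe_filter, mem_setOf_eq, famR, Finset.mem_image] at hq1 hq2
    obtain ⟨⟨p1, hp1, rfl⟩, -⟩ := hq1
    obtain ⟨⟨p2, hp2, rfl⟩, -⟩ := hq2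
    have hp12 : p1 ≠ p2 := fun h' => hne' (by rw [h'])
    have := h.disj hp1 hp2 hp12
    rw [bx_cutR, bx_cutR]
    exact this.mono inter_subset_left inter_subset_left

lemma card_famL_le (i : Fin d) (c : ℝ) (𝒜 : Finset ((Fin d → ℝ) × (Fin d → ℝ))) :
    (famL i c 𝒜).card ≤ 𝒜.card :=
  le_trans (Finset.card_filter_le _ _) (Finset.card_image_le)

lemma card_famR_le (i : Fin d) (c : ℝ) (𝒜 : Finset ((Fin d → ℝ) × (Fin d → ℝ))) :
    (famR i c 𝒜).card ≤ 𝒜.card :=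
  le_trans (Finset.card_filter_le _ _) (Finset.card_image_le)

lemma card_famL_lt {𝒜 : Finset ((Fin d → ℝ) × (Fin d → ℝ))} {i : Fin d} {c : ℝ}
    {p₀ : (Fin d → ℝ) × (Fin d → ℝ)} (hp₀ : p₀ ∈ 𝒜) (h : ¬ Nice (cutL i c p₀)) :
    (famL i c 𝒜).card < 𝒜.card := by
  have hsub : famL i c 𝒜 ⊆ (𝒜.erase p₀).image (cutL i c) := by
    intro q hq
    obtain ⟨⟨p, hp, rfl⟩, hq2⟩ := Finset.mem_filter.1 hq |>.imp
      (fun h' => Finset.mem_image.1 h') id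
    refine Finset.mem_image.2 ⟨p, Finset.mem_erase.2 ⟨?_, hp⟩, rfl⟩
    rintro rfl
    exact h hq2
  calc (famL i c 𝒜).card ≤ ((𝒜.erase p₀).image (cutL i c)).card := Finset.card_le_card hsub
    _ ≤ (𝒜.erase p₀).card := Finset.card_image_le
    _ < 𝒜.card := Finset.card_erase_lt_of_mem hp₀

lemma card_famR_lt {𝒜 : Finset ((Fin d → ℝ) × (Fin d → ℝ))} {i : Fin d} {c : ℝ}
    {p₀ : (Fin d → ℝ) × (Fin d → ℝ)} (hp₀ : p₀ ∈ 𝒜) (h : ¬ Nice (cutR i c p₀)) :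
    (famR i c 𝒜).card < 𝒜.card := by
  have hsub : famR i c 𝒜 ⊆ (𝒜.erase p₀).image (cutR i c) := by
    intro q hq
    obtain ⟨⟨p, hp, rfl⟩, hq2⟩ := Finset.mem_filter.1 hq |>.imp
      (fun h' => Finset.mem_image.1 h') id
    refine Finset.mem_image.2 ⟨p, Finset.mem_erase.2 ⟨?_, hp⟩, rfl⟩
    rintro rfl
    exact h hq2
  calc (famR i c 𝒜).card ≤ ((𝒜.erase p₀).image (cutR i c)).card := Finset.card_le_card hsub
    _ ≤ (𝒜.erase p₀).card := Finset.card_image_le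
    _ < 𝒜.card := Finset.card_erase_lt_of_mem hp₀

-- hyperplane cut additivity
lemma volume_cut_add {S : Set (Fin d → ℝ)} (hS : MeasurableSet S) (i : Fin d) (c : ℝ) :
    volume (S ∩ {x | x i < c}) + volume (S ∩ {x | c < x i}) = volume S := by
  have hyp : volume {x : Fin d → ℝ | x i = c} = 0 := by
    rw [volume_pi]
    exact Measure.pi_eval_preimage_null (fun _ => (volume : Measure ℝ)) (measure_singleton c)
  have hdisj : Disjoint (S ∩ {x | x i < c}) (S ∩ {x | c < x i}) := by
    refine Set.disjoint_left.2 ?_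
    rintro x ⟨-, h1⟩ ⟨-, h2⟩
    exact absurd (mem_setOf_eq ▸ h2) (not_lt.2 (le_of_lt h1))
  have hm1 : MeasurableSet (S ∩ {x | x i < c}) :=
    hS.inter (measurableSet_lt (measurable_pi_apply i) measurable_const)
  have hm2 : MeasurableSet (S ∩ {x | c < x i}) :=
    hS.inter (measurableSet_lt measurable_const (measurable_pi_apply i))
  rw [← measure_union hdisj hm2]
  apply le_antisymm
  · exact measure_mono (union_subset inter_subset_left inter_subset_left)
  · calc volume S ≤ volume ((S ∩ {x | x i < c} ∪ S ∩ {x | c < x i}) ∪ {x | x i = c}) := by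
          apply measure_mono
          intro x hx
          rcases lt_trichotomy (x i) c with h | h | h
          · exact Or.inl (Or.inl ⟨hx, h⟩)
          · exact Or.inr h
          · exact Or.inl (Or.inr ⟨hx, h⟩)
      _ ≤ volume (S ∩ {x | x i < c} ∪ S ∩ {x | c < x i}) + volume {x : Fin d → ℝ | x i = c} :=
          measure_union_le _ _
      _ = volume (S ∩ {x | x i < c} ∪ S ∩ {x | c < x i}) := by rw [hyp, add_zero]

-- separation
lemma exists_sep {p q : (Fin d → ℝ) × (Fin d → ℝ)} (hp : Nice p) (hq : Nice q)
    (h : Disjoint (bx p) (bx q)) : ∃ i, p.2 i ≤ q.1 i ∨ q.2 i ≤ p.1 i := by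
  by_contra hn
  push_neg at hn
  have hpt : ∀ i, ∃ y, y ∈ Ioo (p.1 i) (p.2 i) ∩ Ioo (q.1 i) (q.2 i) := by
    intro i
    obtain ⟨h1, h2⟩ := hn i
    refine ⟨(max (p.1 i) (q.1 i) + min (p.2 i) (q.2 i)) / 2, ?_⟩
    have l1 : max (p.1 i) (q.1 i) < min (p.2 i) (q.2 i) := by
      simp only [max_lt_iff, lt_min_iff]
      exact ⟨⟨hp i, h1⟩, ⟨h2, hq i⟩⟩
    have l2 : p.1 i ≤ max (p.1 i) (q.1 i) := le_max_left _ _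
    have l3 : q.1 i ≤ max (p.1 i) (q.1 i) := le_max_right _ _
    have l4 : min (p.2 i) (q.2 i) ≤ p.2 i := min_le_left _ _
    have l5 : min (p.2 i) (q.2 i) ≤ q.2 i := min_le_right _ _
    refine ⟨⟨by linarith, by linarith⟩, ⟨by linarith, by linarith⟩⟩
  choose y hy using hpt
  have : y ∈ bx p ∩ bx q :=
    ⟨fun i _ => (hy i).1, fun i _ => (hy i).2⟩
  exact Set.disjoint_left.1 h this.1 this.2

noncomputable def cutVol (ℬ : Finset ((Fin d → ℝ) × (Fin d → ℝ))) (i : Fin d) (t : ℝ) : ℝ :=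
  (volume (famSet ℬ ∩ {x | x i < t})).toReal

noncomputable def slabC (ℬ : Finset ((Fin d → ℝ) × (Fin d → ℝ))) (i : Fin d) : ℝ :=
  ∑ p ∈ ℬ, ∏ j ∈ Finset.univ.erase i, (p.2 j - p.1 j)

lemma slabC_nonneg {ℬ : Finset ((Fin d → ℝ) × (Fin d → ℝ))} (h : Good ℬ) (i : Fin d) :
    0 ≤ slabC ℬ i :=
  Finset.sum_nonneg fun p hp => Finset.prod_nonneg fun j _ => by linarith [h.nice p hp j]

lemma volume_slab_le {ℬ : Finset ((Fin d → ℝ) × (Fin d → ℝ))} (h : Good ℬ) (i : Fin d)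
    {s t : ℝ} (hst : s ≤ t) :
    volume (famSet ℬ ∩ {x | s ≤ x i ∧ x i < t}) ≤
      ENNReal.ofReal (t - s) * ENNReal.ofReal (slabC ℬ i) := by
  have h1 : famSet ℬ ∩ {x | s ≤ x i ∧ x i < t} = ⋃ p ∈ ℬ, (bx p ∩ {x | s ≤ x i ∧ x i < t}) := by
    simp [famSet, iUnion_inter]
  rw [h1]
  refine le_trans (measure_biUnion_finset_le _ _) ?_
  have h2 : ∀ p ∈ ℬ, volume (bx p ∩ {x | s ≤ x i ∧ x i < t}) ≤
      ENNReal.ofReal (t - s) * ∏ j ∈ Finset.univ.erase i, ENNReal.ofReal (p.2 j - p.1 j) := by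
    intro p hp
    have hsub : bx p ∩ {x | s ≤ x i ∧ x i < t} ⊆
        univ.pi (Function.update (fun j => Ioo (p.1 j) (p.2 j)) i (Ico s t)) := by
      rintro x ⟨hx, hxi⟩ j _
      rcases eq_or_ne j i with rfl | hj
      · rw [Function.update_self]; exact hxi
      · rw [Function.update_of_ne hj]; exact hx j (mem_univ j)
    refine le_trans (measure_mono hsub) ?_
    rw [volume_pi_pi, ← Finset.mul_prod_erase Finset.univ _ (Finset.mem_univ i),
      Function.update_self]
    rw [Real.volume_Ico]
    refine mul_le_mul_right (le_of_eq (Finset.prod_congr rfl fun j hj => ?_)) _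
    rw [Function.update_of_ne (Finset.mem_erase.1 hj).1, Real.volume_Ioo]
  calc ∑ p ∈ ℬ, volume (bx p ∩ {x | s ≤ x i ∧ x i < t})
      ≤ ∑ p ∈ ℬ, ENNReal.ofReal (t - s) * ∏ j ∈ Finset.univ.erase i,
          ENNReal.ofReal (p.2 j - p.1 j) := Finset.sum_le_sum h2
    _ = ENNReal.ofReal (t - s) * ∑ p ∈ ℬ, ∏ j ∈ Finset.univ.erase i,
          ENNReal.ofReal (p.2 j - p.1 j) := by rw [Finset.mul_sum]
    _ ≤ ENNReal.ofReal (t - s) * ENNReal.ofReal (slabC ℬ i) := by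
        refine mul_le_mul_right ?_ _
        rw [slabC, ENNReal.ofReal_sum_of_nonneg
          (fun p hp => Finset.prod_nonneg fun j _ => by linarith [h.nice p hp j])]
        refine Finset.sum_le_sum fun p hp => ?_
        rw [ENNReal.ofReal_prod_of_nonneg (fun j _ => by linarith [h.nice p hp j])]

lemma cutVol_mono (ℬ : Finset ((Fin d → ℝ) × (Fin d → ℝ))) (i : Fin d) :
    Monotone (cutVol ℬ i) := by
  intro s t hst
  refine ENNReal.toReal_mono (volume_famSet_lt_top ℬ |>.trans_le le_top |> fun _ => ?_) ?_
  · exact ((measure_mono inter_subset_left).trans_lt (volume_famSet_lt_top ℬ)).ne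
  · exact measure_mono (inter_subset_inter_right _ fun x hx => lt_of_lt_of_le hx hst)

lemma cutVol_lipschitz {ℬ : Finset ((Fin d → ℝ) × (Fin d → ℝ))} (h : Good ℬ) (i : Fin d)
    {s t : ℝ} (hst : s ≤ t) :
    cutVol ℬ i t - cutVol ℬ i s ≤ slabC ℬ i * (t - s) := by
  have hsplit : famSet ℬ ∩ {x | x i < t} ⊆
      (famSet ℬ ∩ {x | x i < s}) ∪ (famSet ℬ ∩ {x | s ≤ x i ∧ x i < t}) := by
    rintro x ⟨hx, hxt⟩
    rcases lt_or_ge (x i) s with hh | hh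
    · exact Or.inl ⟨hx, hh⟩
    · exact Or.inr ⟨hx, hh, hxt⟩
  have hv : volume (famSet ℬ ∩ {x | x i < t}) ≤ volume (famSet ℬ ∩ {x | x i < s})
      + ENNReal.ofReal (t - s) * ENNReal.ofReal (slabC ℬ i) :=
    le_trans (measure_mono hsplit) (le_trans (measure_union_le _ _)
      (add_le_add_right (volume_slab_le h i hst) _))
  have hfin : ∀ u : ℝ, volume (famSet ℬ ∩ {x | x i < u}) ≠ ⊤ :=
    fun u => ((measure_mono inter_subset_left).trans_lt (volume_famSet_lt_top ℬ)).ne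
  have := ENNReal.toReal_mono (by
      refine ENNReal.add_ne_top.2 ⟨hfin s, ?_⟩
      exact (ENNReal.mul_lt_top ENNReal.ofReal_lt_top ENNReal.ofReal_lt_top).ne) hv
  rw [ENNReal.toReal_add (hfin s) (by
      exact (ENNReal.mul_lt_top ENNReal.ofReal_lt_top ENNReal.ofReal_lt_top).ne),
    ENNReal.toReal_mul, ENNReal.toReal_ofReal (by linarith),
    ENNReal.toReal_ofReal (slabC_nonneg h i)] at this
  unfold cutVol
  linarith

lemma cutVol_continuous {ℬ : Finset ((Fin d → ℝ) × (Fin d → ℝ))} (h : Good ℬ) (i : Fin d) :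
    Continuous (cutVol ℬ i) := by
  have : LipschitzWith (Real.toNNReal (slabC ℬ i)) (cutVol ℬ i) := by
    refine LipschitzWith.of_dist_le_mul fun a b => ?_
    rcases le_total a b with hab | hab
    · rw [Real.dist_eq, abs_of_nonpos (by linarith [cutVol_mono ℬ i hab]),
        Real.dist_eq, abs_of_nonpos (by linarith)]
      have := cutVol_lipschitz h i hab
      have hC : (Real.toNNReal (slabC ℬ i) : ℝ) = slabC ℬ i :=
        Real.coe_toNNReal _ (slabC_nonneg h i)
      rw [hC]; nlinarith [slabC_nonneg h i]
    · rw [Real.dist_eq, abs_of_nonneg (by linarith [cutVol_mono ℬ i hab]),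
        Real.dist_eq, abs_of_nonneg (by linarith)]
      have := cutVol_lipschitz h i hab
      have hC : (Real.toNNReal (slabC ℬ i) : ℝ) = slabC ℬ i :=
        Real.coe_toNNReal _ (slabC_nonneg h i)
      rw [hC]; nlinarith [slabC_nonneg h i]
  exact this.continuous

lemma exists_cut {ℬ : Finset ((Fin d → ℝ) × (Fin d → ℝ))} (h : Good ℬ) (i : Fin d)
    {v : ℝ} (hv0 : 0 ≤ v) (hv1 : v ≤ (volume (famSet ℬ)).toReal) :
    ∃ c, cutVol ℬ i c = v := by
  obtain ⟨p₀, hp₀⟩ := h.ne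
  set lo := ℬ.inf' ⟨p₀, hp₀⟩ (fun p => p.1 i) with hlo
  set hi := ℬ.sup' ⟨p₀, hp₀⟩ (fun p => p.2 i) with hhi
  have hlohi : lo ≤ hi := by
    have h1 : lo ≤ p₀.1 i := Finset.inf'_le _ hp₀
    have h2 : p₀.2 i ≤ hi := Finset.le_sup' (f := fun p => p.2 i) hp₀
    linarith [h.nice p₀ hp₀ i]
  have hflo : cutVol ℬ i lo = 0 := by
    have : famSet ℬ ∩ {x | x i < lo} = ∅ := by
      rw [eq_empty_iff_forall_notMem]
      rintro x ⟨hx, hxi⟩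
      obtain ⟨p, hp, hxp⟩ := by
        simpa only [famSet, mem_iUnion, exists_prop] using hx
      have := (hxp i (mem_univ i)).1
      have : lo ≤ p.1 i := Finset.inf'_le _ hp
      simp only [mem_setOf_eq] at hxi
      linarith [(hxp i (mem_univ i)).1]
    rw [cutVol, this]; simp
  have hfhi : cutVol ℬ i hi = (volume (famSet ℬ)).toReal := by
    have : famSet ℬ ∩ {x | x i < hi} = famSet ℬ := by
      refine inter_eq_left.2 fun x hx => ?_
      obtain ⟨p, hp, hxp⟩ := by
        simpa only [famSet, mem_iUnion, exists_prop] using hx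
      have h1 := (hxp i (mem_univ i)).2
      have h2 : p.2 i ≤ hi := Finset.le_sup' (f := fun p => p.2 i) hp
      simp only [mem_setOf_eq]
      linarith
    rw [cutVol, this]
  have := intermediate_value_Icc hlohi (cutVol_continuous h i).continuousOn
  rw [hflo, hfhi] at this
  obtain ⟨c, _, hc⟩ := this ⟨hv0, hv1⟩
  exact ⟨c, hc⟩


-- boundedness and finiteness of sums
lemma famSet_subset_Icc {𝒜 : Finset ((Fin d → ℝ) × (Fin d → ℝ))} (h : Good 𝒜) :
    famSet 𝒜 ⊆ Icc (fun i => 𝒜.inf' h.ne (fun p => p.1 i))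
      (fun i => 𝒜.sup' h.ne (fun p => p.2 i)) := by
  intro x hx
  obtain ⟨p, hp, hxp⟩ := by simpa only [famSet, mem_iUnion, exists_prop] using hx
  constructor <;> intro i
  · exact le_trans (Finset.inf'_le (f := fun p => p.1 i) hp) (hxp i (mem_univ i)).1.le
  · exact le_trans (hxp i (mem_univ i)).2.le (Finset.le_sup' (f := fun p => p.2 i) hp)

lemma volume_famSet_add_lt_top {𝒜 ℬ : Finset ((Fin d → ℝ) × (Fin d → ℝ))}
    (hA : Good 𝒜) (hB : Good ℬ) : volume (famSet 𝒜 + famSet ℬ) < ⊤ := by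
  have hsub : famSet 𝒜 + famSet ℬ ⊆
      Icc ((fun i => 𝒜.inf' hA.ne (fun p => p.1 i)) + (fun i => ℬ.inf' hB.ne (fun p => p.1 i)))
        ((fun i => 𝒜.sup' hA.ne (fun p => p.2 i)) + (fun i => ℬ.sup' hB.ne (fun p => p.2 i))) := by
    rintro x ⟨a, ha, b, hb, rfl⟩
    obtain ⟨ha1, ha2⟩ := famSet_subset_Icc hA ha
    obtain ⟨hb1, hb2⟩ := famSet_subset_Icc hB hb
    constructor <;> intro i
    · exact add_le_add (ha1 i) (hb1 i)
    · exact add_le_add (ha2 i) (hb2 i)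
  exact lt_of_le_of_lt (measure_mono hsub) isCompact_Icc.measure_lt_top

-- base case
lemma base_case (hd : 0 < d) {p q : (Fin d → ℝ) × (Fin d → ℝ)} (hp : Nice p) (hq : Nice q) :
    (volume (bx p)).toReal ^ ((1:ℝ)/d) + (volume (bx q)).toReal ^ ((1:ℝ)/d) ≤
      (volume (bx p + bx q)).toReal ^ ((1:ℝ)/d) := by
  have hpq : Nice ((p.1 + q.1, p.2 + q.2) : (Fin d → ℝ) × (Fin d → ℝ)) :=
    fun i => add_lt_add (hp i) (hq i)
  rw [bx_add_bx hp hq, volume_bx_toReal hp, volume_bx_toReal hq, volume_bx_toReal hpq]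
  have := amgm_boxes hd (fun i => p.2 i - p.1 i) (fun i => q.2 i - q.1 i)
    (fun i => sub_pos.2 (hp i)) (fun i => sub_pos.2 (hq i))
  convert this using 3 with i
  simp only [Pi.add_apply]
  ring

set_option maxHeartbeats 1000000 in
lemma step (hd : 0 < d) (𝒜 ℬ : Finset ((Fin d → ℝ) × (Fin d → ℝ)))
    (IH : ∀ 𝒜' ℬ' : Finset ((Fin d → ℝ) × (Fin d → ℝ)),
      𝒜'.card + ℬ'.card < 𝒜.card + ℬ.card → Good 𝒜' → Good ℬ' →
      (volume (famSet 𝒜')).toReal ^ ((1:ℝ)/d) + (volume (famSet ℬ')).toReal ^ ((1:ℝ)/d) ≤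
        (volume (famSet 𝒜' + famSet ℬ')).toReal ^ ((1:ℝ)/d))
    (h2 : 2 ≤ 𝒜.card) (hA : Good 𝒜) (hB : Good ℬ) :
    (volume (famSet 𝒜)).toReal ^ ((1:ℝ)/d) + (volume (famSet ℬ)).toReal ^ ((1:ℝ)/d) ≤
      (volume (famSet 𝒜 + famSet ℬ)).toReal ^ ((1:ℝ)/d) := by
  obtain ⟨p₁, hp₁, p₂, hp₂, hp12⟩ := Finset.one_lt_card.1 h2
  obtain ⟨i, hsep⟩ := exists_sep (hA.nice p₁ hp₁) (hA.nice p₂ hp₂) (hA.disj hp₁ hp₂ hp12)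
  obtain ⟨pL, pR, hpL, hpR, hLR⟩ :
      ∃ pL pR, pL ∈ 𝒜 ∧ pR ∈ 𝒜 ∧ pL.2 i ≤ pR.1 i := by
    rcases hsep with h | h
    · exact ⟨p₁, p₂, hp₁, hp₂, h⟩
    · exact ⟨p₂, p₁, hp₂, hp₁, h⟩
  set c := pL.2 i with hc
  set AL := famL i c 𝒜 with hALdef
  set AR := famR i c 𝒜 with hARdef
  have hbxL : bx pL ⊆ famSet 𝒜 ∩ {x | x i < c} := fun x hx =>
    ⟨subset_biUnion_of_mem hpL hx, (hx i (mem_univ i)).2⟩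
  have hbxR : bx pR ⊆ famSet 𝒜 ∩ {x | c < x i} := fun x hx =>
    ⟨subset_biUnion_of_mem hpR hx, lt_of_le_of_lt hLR (hx i (mem_univ i)).1⟩
  have hALne : (famSet 𝒜 ∩ {x | x i < c}).Nonempty :=
    (bx_nonempty (hA.nice pL hpL)).mono hbxL
  have hARne : (famSet 𝒜 ∩ {x | c < x i}).Nonempty :=
    (bx_nonempty (hA.nice pR hpR)).mono hbxR
  have hgoodAL : Good AL := good_famL hA hALne
  have hgoodAR : Good AR := good_famR hA hARne
  have hcardAL : AL.card < 𝒜.card := by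
    refine card_famL_lt hpR fun hn => ?_
    have h1 := hn i
    simp only [cutL, Function.update_self] at h1
    have h2' : min (pR.2 i) c ≤ pR.1 i := le_trans (min_le_right _ _) hLR
    linarith
  have hcardAR : AR.card < 𝒜.card := by
    refine card_famR_lt hpL fun hn => ?_
    have h1 := hn i
    simp only [cutR, Function.update_self] at h1
    have h2' : c ≤ max (pL.1 i) c := le_max_right _ _
    rw [hc] at h1 h2'
    linarith
  -- volumes
  set vA := (volume (famSet 𝒜)).toReal with hvA
  set vB := (volume (famSet ℬ)).toReal with hvB
  set vAL := (volume (famSet AL)).toReal with hvAL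
  set vAR := (volume (famSet AR)).toReal with hvAR
  have hALset : famSet AL = famSet 𝒜 ∩ {x | x i < c} := famSet_famL i c 𝒜
  have hARset : famSet AR = famSet 𝒜 ∩ {x | c < x i} := famSet_famR i c 𝒜
  have hAsum : vAL + vAR = vA := by
    rw [hvAL, hvAR, hvA, hALset, hARset,
      ← ENNReal.toReal_add
        (((measure_mono inter_subset_left).trans_lt (volume_famSet_lt_top 𝒜)).ne)
        (((measure_mono inter_subset_left).trans_lt (volume_famSet_lt_top 𝒜)).ne),
      volume_cut_add (measurableSet_famSet 𝒜) i c]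
  have hvApos : 0 < vA :=
    ENNReal.toReal_pos (volume_famSet_pos hA).ne' (volume_famSet_lt_top 𝒜).ne
  have hvBpos : 0 < vB :=
    ENNReal.toReal_pos (volume_famSet_pos hB).ne' (volume_famSet_lt_top ℬ).ne
  have hvALpos : 0 < vAL :=
    ENNReal.toReal_pos (volume_famSet_pos hgoodAL).ne' (volume_famSet_lt_top AL).ne
  have hvARpos : 0 < vAR :=
    ENNReal.toReal_pos (volume_famSet_pos hgoodAR).ne' (volume_famSet_lt_top AR).ne
  set θ := vAL / vA with hθ
  have hθ0 : 0 < θ := div_pos hvALpos hvApos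
  have hθ1 : θ < 1 := (div_lt_one hvApos).2 (by linarith)
  have hvALeq : vAL = θ * vA := by rw [hθ, div_mul_cancel₀ _ hvApos.ne']
  have hvAReq : vAR = (1 - θ) * vA := by
    have : vAR = vA - vAL := by linarith
    rw [this, hvALeq]; ring
  -- cut ℬ
  obtain ⟨c', hc'⟩ := exists_cut hB i (le_of_lt (mul_pos hθ0 hvBpos))
    (by nlinarith : θ * vB ≤ vB)
  set BL := famL i c' ℬ with hBLdef
  set BR := famR i c' ℬ with hBRdef
  have hBLset : famSet BL = famSet ℬ ∩ {x | x i < c'} := famSet_famL i c' ℬ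
  have hBRset : famSet BR = famSet ℬ ∩ {x | c' < x i} := famSet_famR i c' ℬ
  have hvBLeq : (volume (famSet BL)).toReal = θ * vB := by rw [hBLset]; exact hc'
  have hBLne : (famSet ℬ ∩ {x | x i < c'}).Nonempty := by
    rw [← hBLset]
    by_contra hemp
    rw [not_nonempty_iff_eq_empty] at hemp
    rw [hemp] at hvBLeq
    simp only [measure_empty, ENNReal.toReal_zero] at hvBLeq
    nlinarith [mul_pos hθ0 hvBpos]
  have hgoodBL : Good BL := good_famL hB hBLne
  have hvBReq : (volume (famSet BR)).toReal = (1 - θ) * vB := by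
    have hsum : (volume (famSet BL)).toReal + (volume (famSet BR)).toReal = vB := by
      rw [hBLset, hBRset, hvB,
        ← ENNReal.toReal_add
          (((measure_mono inter_subset_left).trans_lt (volume_famSet_lt_top ℬ)).ne)
          (((measure_mono inter_subset_left).trans_lt (volume_famSet_lt_top ℬ)).ne),
        volume_cut_add (measurableSet_famSet ℬ) i c']
    rw [hvBLeq] at hsum
    linarith
  have hBRne : (famSet ℬ ∩ {x | c' < x i}).Nonempty := by
    rw [← hBRset]
    by_contra hemp
    rw [not_nonempty_iff_eq_empty] at hemp
    rw [hemp] at hvBReq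
    simp only [measure_empty, ENNReal.toReal_zero] at hvBReq
    nlinarith [mul_pos (show (0:ℝ) < 1 - θ by linarith) hvBpos]
  have hgoodBR : Good BR := good_famR hB hBRne
  -- IH applications
  have hIHL := IH AL BL (by
    have h3 : BL.card ≤ ℬ.card := card_famL_le i c' ℬ
    omega) hgoodAL hgoodBL
  have hIHR := IH AR BR (by
    have h3 : BR.card ≤ ℬ.card := card_famR_le i c' ℬ
    omega) hgoodAR hgoodBR
  -- sum sets
  set SL := famSet AL + famSet BL with hSL
  set SR := famSet AR + famSet BR with hSR
  have hSLsub : SL ⊆ (famSet 𝒜 + famSet ℬ) ∩ {x | x i < c + c'} := by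
    rintro x ⟨a, ha, b, hb, rfl⟩
    rw [hALset] at ha; rw [hBLset] at hb
    refine ⟨add_mem_add ha.1 hb.1, ?_⟩
    simp only [mem_setOf_eq]
    exact add_lt_add ha.2 hb.2
  have hSRsub : SR ⊆ (famSet 𝒜 + famSet ℬ) ∩ {x | c + c' < x i} := by
    rintro x ⟨a, ha, b, hb, rfl⟩
    rw [hARset] at ha; rw [hBRset] at hb
    refine ⟨add_mem_add ha.1 hb.1, ?_⟩
    simp only [mem_setOf_eq]
    exact add_lt_add ha.2 hb.2
  have hdisjLR : Disjoint SL SR := by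
    refine Set.disjoint_left.2 fun x hx1 hx2 => ?_
    have h1 := (hSLsub hx1).2
    have h2 := (hSRsub hx2).2
    simp only [mem_setOf_eq] at h1 h2
    linarith
  have hSLmeas : MeasurableSet SL := ((isOpen_famSet BL).add_left).measurableSet
  have hSRmeas : MeasurableSet SR := ((isOpen_famSet BR).add_left).measurableSet
  have hABfin : volume (famSet 𝒜 + famSet ℬ) < ⊤ := volume_famSet_add_lt_top hA hB
  have hSLfin : volume SL ≠ ⊤ :=
    ((measure_mono (hSLsub.trans inter_subset_left)).trans_lt hABfin).ne
  have hSRfin : volume SR ≠ ⊤ :=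
    ((measure_mono (hSRsub.trans inter_subset_left)).trans_lt hABfin).ne
  have hvol2 : (volume SL).toReal + (volume SR).toReal ≤
      (volume (famSet 𝒜 + famSet ℬ)).toReal := by
    rw [← ENNReal.toReal_add hSLfin hSRfin, ← measure_union hdisjLR hSRmeas]
    exact ENNReal.toReal_mono hABfin.ne (measure_mono (union_subset
      (hSLsub.trans inter_subset_left) (hSRsub.trans inter_subset_left)))
  -- arithmetic
  have hdr : (1:ℝ)/d = ((d:ℝ))⁻¹ := one_div _
  set P := vA ^ ((1:ℝ)/d) + vB ^ ((1:ℝ)/d) with hP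
  have hPnn : 0 ≤ P := by positivity
  have hSLnn : (0:ℝ) ≤ (volume SL).toReal := ENNReal.toReal_nonneg
  have hSRnn : (0:ℝ) ≤ (volume SR).toReal := ENNReal.toReal_nonneg
  have hfactL : vAL ^ ((1:ℝ)/d) + (volume (famSet BL)).toReal ^ ((1:ℝ)/d)
      = θ ^ ((1:ℝ)/d) * P := by
    rw [hvBLeq, hvALeq, Real.mul_rpow hθ0.le hvApos.le, Real.mul_rpow hθ0.le hvBpos.le, hP]
    ring
  have hfactR : vAR ^ ((1:ℝ)/d) + (volume (famSet BR)).toReal ^ ((1:ℝ)/d)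
      = (1 - θ) ^ ((1:ℝ)/d) * P := by
    rw [hvBReq, hvAReq, Real.mul_rpow (by linarith) hvApos.le,
      Real.mul_rpow (by linarith) hvBpos.le, hP]
    ring
  have hL2 : θ * P ^ d ≤ (volume SL).toReal := by
    have h1 : (vAL ^ ((1:ℝ)/d) + (volume (famSet BL)).toReal ^ ((1:ℝ)/d)) ^ d ≤
        ((volume SL).toReal ^ ((1:ℝ)/d)) ^ d :=
      pow_le_pow_left₀ (by positivity) hIHL d
    rw [hfactL, mul_pow, hdr, Real.rpow_inv_natCast_pow hθ0.le hd.ne',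
      Real.rpow_inv_natCast_pow hSLnn hd.ne'] at h1
    exact h1
  have hR2 : (1 - θ) * P ^ d ≤ (volume SR).toReal := by
    have h1 : (vAR ^ ((1:ℝ)/d) + (volume (famSet BR)).toReal ^ ((1:ℝ)/d)) ^ d ≤
        ((volume SR).toReal ^ ((1:ℝ)/d)) ^ d :=
      pow_le_pow_left₀ (by positivity) hIHR d
    rw [hfactR, mul_pow, hdr, Real.rpow_inv_natCast_pow (by linarith : (0:ℝ) ≤ 1 - θ) hd.ne',
      Real.rpow_inv_natCast_pow hSRnn hd.ne'] at h1
    exact h1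
  have hfinal : P ^ d ≤ (volume (famSet 𝒜 + famSet ℬ)).toReal := by
    have hsplit : θ * P ^ d + (1 - θ) * P ^ d = P ^ d := by ring
    linarith
  calc P = (P ^ d) ^ ((1:ℝ)/d) := by
        rw [hdr, Real.pow_rpow_inv_natCast hPnn hd.ne']
    _ ≤ (volume (famSet 𝒜 + famSet ℬ)).toReal ^ ((1:ℝ)/d) :=
        Real.rpow_le_rpow (by positivity) hfinal (by positivity)

theorem key (hd : 0 < d) (n : ℕ) : ∀ 𝒜 ℬ : Finset ((Fin d → ℝ) × (Fin d → ℝ)),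
    𝒜.card + ℬ.card ≤ n → Good 𝒜 → Good ℬ →
    (volume (famSet 𝒜)).toReal ^ ((1:ℝ)/d) + (volume (famSet ℬ)).toReal ^ ((1:ℝ)/d) ≤
      (volume (famSet 𝒜 + famSet ℬ)).toReal ^ ((1:ℝ)/d) := by
  induction n using Nat.strong_induction_on with
  | _ n IHn =>
    intro 𝒜 ℬ hn hA hB
    by_cases h2 : 2 ≤ 𝒜.card
    · exact step hd 𝒜 ℬ
        (fun 𝒜' ℬ' hlt hA' hB' =>
          IHn (𝒜'.card + ℬ'.card) (lt_of_lt_of_le hlt hn) 𝒜' ℬ' le_rfl hA' hB')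
        h2 hA hB
    · by_cases h2' : 2 ≤ ℬ.card
      · have := step hd ℬ 𝒜
          (fun 𝒜' ℬ' hlt hA' hB' =>
            IHn (𝒜'.card + ℬ'.card) (by omega) 𝒜' ℬ' le_rfl hA' hB')
          h2' hB hA
        rwa [add_comm (famSet ℬ), add_comm ((volume (famSet ℬ)).toReal ^ ((1:ℝ)/d))] at this
      · have hA1 : 𝒜.card = 1 := by have := Finset.card_pos.2 hA.ne; omega
        have hB1 : ℬ.card = 1 := by have := Finset.card_pos.2 hB.ne; omega
        obtain ⟨p, rfl⟩ := Finset.card_eq_one.1 hA1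
        obtain ⟨q, rfl⟩ := Finset.card_eq_one.1 hB1
        have hfp : famSet {p} = bx p := by simp [famSet]
        have hfq : famSet {q} = bx q := by simp [famSet]
        rw [hfp, hfq]
        exact base_case hd (hA.nice p (Finset.mem_singleton_self p))
          (hB.nice q (Finset.mem_singleton_self q))

lemma hyperplane_null (i : Fin d) (c : ℝ) : volume {x : Fin d → ℝ | x i = c} = 0 := by
  rw [volume_pi]
  exact Measure.pi_eval_preimage_null (fun _ => (volume : Measure ℝ)) (measure_singleton c)

lemma grid_decomp (𝒜₀ : Finset ((Fin d → ℝ) × (Fin d → ℝ)))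
    (hpos : 0 < volume (famSet 𝒜₀)) :
    ∃ 𝒜' : Finset ((Fin d → ℝ) × (Fin d → ℝ)), Good 𝒜' ∧ famSet 𝒜' ⊆ famSet 𝒜₀ ∧
      volume (famSet 𝒜') = volume (famSet 𝒜₀) := by
  set G : Fin d → Finset ℝ :=
    fun i => 𝒜₀.image (fun p => p.1 i) ∪ 𝒜₀.image (fun p => p.2 i) with hG
  set pred : (Fin d → ℝ) × (Fin d → ℝ) → Prop :=
    fun p => (∀ i, p.1 i < p.2 i ∧ ∀ g ∈ G i, ¬(p.1 i < g ∧ g < p.2 i)) ∧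
      bx p ⊆ famSet 𝒜₀ with hpred
  set 𝒜' : Finset ((Fin d → ℝ) × (Fin d → ℝ)) :=
    ((Fintype.piFinset G) ×ˢ (Fintype.piFinset G)).filter pred with h𝒜'
  have hmem : ∀ p ∈ 𝒜', (∀ i, p.1 i ∈ G i ∧ p.2 i ∈ G i) ∧ pred p := by
    intro p hp
    obtain ⟨hp1, hp2⟩ := Finset.mem_filter.1 hp
    obtain ⟨hq1, hq2⟩ := Finset.mem_product.1 hp1
    exact ⟨fun i => ⟨Fintype.mem_piFinset.1 hq1 i, Fintype.mem_piFinset.1 hq2 i⟩, hp2⟩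
  -- subset
  have hsub : famSet 𝒜' ⊆ famSet 𝒜₀ := by
    refine iUnion₂_subset fun p hp => ?_
    exact (hmem p hp).2.2
  -- hyperplanes are null
  set H : Set (Fin d → ℝ) := ⋃ i, ⋃ g ∈ G i, {x | x i = g} with hH
  have hHnull : volume H = 0 := by
    rw [hH]
    refine measure_iUnion_null fun i => ?_
    exact measure_biUnion_null_iff (G i).countable_toSet |>.2
      fun g _ => hyperplane_null i g
  -- a.e. covering
  have hcov : famSet 𝒜₀ ⊆ famSet 𝒜' ∪ H := by
    intro x hx
    by_cases hxH : x ∈ H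
    · exact Or.inr hxH
    refine Or.inl ?_
    obtain ⟨p, hp, hxp⟩ := by simpa only [famSet, mem_iUnion, exists_prop] using hx
    have hxG : ∀ i, ∀ g ∈ G i, x i ≠ g := by
      intro i g hg hne
      exact hxH (mem_iUnion.2 ⟨i, mem_iUnion₂.2 ⟨g, hg, hne⟩⟩)
    have hlo : ∀ i, ((G i).filter (fun y => y < x i)).Nonempty := fun i =>
      ⟨p.1 i, Finset.mem_filter.2 ⟨Finset.mem_union_left _
        (Finset.mem_image.2 ⟨p, hp, rfl⟩), (hxp i (mem_univ i)).1⟩⟩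
    have hhi : ∀ i, ((G i).filter (fun y => x i < y)).Nonempty := fun i =>
      ⟨p.2 i, Finset.mem_filter.2 ⟨Finset.mem_union_right _
        (Finset.mem_image.2 ⟨p, hp, rfl⟩), (hxp i (mem_univ i)).2⟩⟩
    set s : Fin d → ℝ := fun i => ((G i).filter (fun y => y < x i)).max' (hlo i) with hs
    set t : Fin d → ℝ := fun i => ((G i).filter (fun y => x i < y)).min' (hhi i) with ht
    have hsmem : ∀ i, s i ∈ G i ∧ s i < x i := fun i => by
      have := ((G i).filter (fun y => y < x i)).max'_mem (hlo i)
      exact ⟨(Finset.mem_filter.1 this).1, (Finset.mem_filter.1 this).2⟩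
    have htmem : ∀ i, t i ∈ G i ∧ x i < t i := fun i => by
      have := ((G i).filter (fun y => x i < y)).min'_mem (hhi i)
      exact ⟨(Finset.mem_filter.1 this).1, (Finset.mem_filter.1 this).2⟩
    have hsle : ∀ i, ∀ g ∈ G i, g < x i → g ≤ s i := by
      intro i g hg hgx
      have hmem : g ∈ (G i).filter (fun y => y < x i) := Finset.mem_filter.2 ⟨hg, hgx⟩
      exact Finset.le_max' _ _ hmem
    have htle : ∀ i, ∀ g ∈ G i, x i < g → t i ≤ g := by
      intro i g hg hgx
      have hmem : g ∈ (G i).filter (fun y => x i < y) := Finset.mem_filter.2 ⟨hg, hgx⟩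
      exact Finset.min'_le _ _ hmem
    have hbxsub : bx (s, t) ⊆ bx p := by
      intro y hy i _
      have hyi := hy i (mem_univ i)
      simp only [mem_Ioo] at hyi ⊢
      constructor
      · have : p.1 i ≤ s i := hsle i (p.1 i)
          (Finset.mem_union_left _ (Finset.mem_image.2 ⟨p, hp, rfl⟩)) (hxp i (mem_univ i)).1
        linarith [hyi.1]
      · have : t i ≤ p.2 i := htle i (p.2 i)
          (Finset.mem_union_right _ (Finset.mem_image.2 ⟨p, hp, rfl⟩)) (hxp i (mem_univ i)).2
        linarith [hyi.2]
    have hstmem : (s, t) ∈ 𝒜' := by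
      rw [h𝒜']
      refine Finset.mem_filter.2 ⟨Finset.mem_product.2
        ⟨Fintype.mem_piFinset.2 fun i => (hsmem i).1,
         Fintype.mem_piFinset.2 fun i => (htmem i).1⟩, ?_, ?_⟩
      · intro i
        refine ⟨lt_trans (hsmem i).2 (htmem i).2, fun g hg ⟨hg1, hg2⟩ => ?_⟩
        rcases lt_trichotomy g (x i) with h | h | h
        · exact absurd (hsle i g hg h) (not_le.2 hg1)
        · exact hxG i g hg h.symm
        · exact absurd (htle i g hg h) (not_le.2 hg2)
      · exact hbxsub.trans (subset_biUnion_of_mem hp)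
    refine mem_iUnion₂.2 ⟨(s, t), hstmem, fun i _ => ?_⟩
    exact ⟨(hsmem i).2, (htmem i).2⟩
  have hvol : volume (famSet 𝒜') = volume (famSet 𝒜₀) := by
    apply le_antisymm (measure_mono hsub)
    calc volume (famSet 𝒜₀) ≤ volume (famSet 𝒜' ∪ H) := measure_mono hcov
      _ ≤ volume (famSet 𝒜') + volume H := measure_union_le _ _
      _ = volume (famSet 𝒜') := by rw [hHnull, add_zero]
  have hne : 𝒜'.Nonempty := by
    by_contra hemp
    rw [Finset.not_nonempty_iff_eq_empty] at hemp
    rw [hemp] at hvol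
    simp only [famSet, Finset.notMem_empty, iUnion_of_empty, iUnion_empty,
      measure_empty] at hvol
    · exact absurd hvol.symm (ne_of_gt hpos)
  refine ⟨𝒜', ⟨hne, fun p hp i => ((hmem p hp).2.1 i).1, ?_⟩, hsub, hvol⟩
  -- disjointness
  intro p hp q hq hpq
  rw [Set.disjoint_left]
  intro x hxp hxq
  apply hpq
  have hps := hmem p hp
  have hqs := hmem q hq
  have heq : ∀ i, p.1 i = q.1 i ∧ p.2 i = q.2 i := by
    intro i
    have hxpi := hxp i (mem_univ i)
    have hxqi := hxq i (mem_univ i)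
    simp only [mem_Ioo] at hxpi hxqi
    have h1 : p.1 i = q.1 i := by
      rcases lt_trichotomy (p.1 i) (q.1 i) with h | h | h
      · exact ((hps.2.1 i).2 (q.1 i) (hqs.1 i).1 ⟨h, lt_trans hxqi.1 hxpi.2⟩).elim
      · exact h
      · exact ((hqs.2.1 i).2 (p.1 i) (hps.1 i).1 ⟨h, lt_trans hxpi.1 hxqi.2⟩).elim
    have h2 : p.2 i = q.2 i := by
      rcases lt_trichotomy (p.2 i) (q.2 i) with h | h | h
      · exact ((hqs.2.1 i).2 (p.2 i) (hps.1 i).2 ⟨lt_trans hxqi.1 hxpi.2, h⟩).elim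
      · exact h
      · exact ((hps.2.1 i).2 (q.2 i) (hqs.1 i).2 ⟨lt_trans hxpi.1 hxqi.2, h⟩).elim
    exact ⟨h1, h2⟩
  exact Prod.ext (funext fun i => (heq i).1) (funext fun i => (heq i).2)

lemma compact_cover {A : Set (Fin d → ℝ)} (hA : IsCompact A) {r : ℝ} (hr : 0 < r) :
    ∃ 𝒜₀ : Finset ((Fin d → ℝ) × (Fin d → ℝ)),
      A ⊆ famSet 𝒜₀ ∧ famSet 𝒜₀ ⊆ Metric.thickening r A := by
  classical
  set box : (Fin d → ℝ) → (Fin d → ℝ) × (Fin d → ℝ) :=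
    fun a => (fun i => a i - r/2, fun i => a i + r/2) with hbox
  have hball : ∀ a, bx (box a) ⊆ Metric.ball a r := by
    intro a x hx
    rw [Metric.mem_ball]
    rw [dist_pi_lt_iff hr]
    intro i
    have := hx i (mem_univ i)
    simp only [hbox, mem_Ioo] at this
    rw [Real.dist_eq, abs_lt]
    constructor <;> [linarith [this.1]; linarith [this.2]]
  have hcover : A ⊆ ⋃ a ∈ A, bx (box a) := by
    intro a ha
    refine mem_iUnion₂.2 ⟨a, ha, fun i _ => ?_⟩
    simp only [hbox, mem_Ioo]
    constructor <;> linarith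
  obtain ⟨t, htA, htfin, htcov⟩ :=
    hA.elim_finite_subcover_image (fun a _ => isOpen_bx (box a)) hcover
  refine ⟨htfin.toFinset.image box, ?_, ?_⟩
  · intro x hx
    obtain ⟨a, ha, hxa⟩ := by simpa only [mem_iUnion, exists_prop] using htcov hx
    exact mem_iUnion₂.2 ⟨box a, Finset.mem_image.2 ⟨a, htfin.mem_toFinset.2 ha, rfl⟩, hxa⟩
  · refine iUnion₂_subset fun p hp => ?_
    obtain ⟨a, ha, rfl⟩ := Finset.mem_image.1 hp
    exact (hball a).trans (Metric.ball_subset_thickening (htA (htfin.mem_toFinset.1 ha)) r)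

lemma thick_add {A B : Set (Fin d → ℝ)} {r : ℝ} (hr : 0 < r) :
    Metric.thickening r A + Metric.thickening r B ⊆ Metric.thickening (2*r) (A + B) := by
  rintro x ⟨u, hu, v, hv, rfl⟩
  obtain ⟨a, ha, hua⟩ := Metric.mem_thickening_iff.1 hu
  obtain ⟨b, hb, hvb⟩ := Metric.mem_thickening_iff.1 hv
  refine Metric.mem_thickening_iff.2 ⟨a + b, add_mem_add ha hb, ?_⟩
  calc dist (u + v) (a + b) ≤ dist u a + dist v b := dist_add_add_le _ _ _ _
    _ < 2 * r := by linarith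

theorem pi_BM (hd : 0 < d) (A B : Set (Fin d → ℝ)) (hA : IsCompact A) (hB : IsCompact B)
    (hAne : A.Nonempty) (hBne : B.Nonempty) :
    (volume A).toReal ^ ((1:ℝ)/d) + (volume B).toReal ^ ((1:ℝ)/d) ≤
      (volume (A + B)).toReal ^ ((1:ℝ)/d) := by
  have hABc : IsCompact (A + B) := hA.add hB
  have hABfin : volume (A + B) < ⊤ := hABc.measure_lt_top
  have hd1 : (1:ℝ)/d ≠ 0 := by positivity
  -- degenerate cases
  by_cases hA0 : volume A = 0
  · obtain ⟨a, ha⟩ := hAne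
    have h1 : {a} + B ⊆ A + B := add_subset_add_right (singleton_subset_iff.2 ha)
    have h2 : volume ({a} + B) = volume B := by
      rw [Set.singleton_add, Set.image_add_left, measure_preimage_add]
    rw [hA0]
    simp only [ENNReal.toReal_zero, Real.zero_rpow hd1, zero_add]
    exact Real.rpow_le_rpow ENNReal.toReal_nonneg
      (ENNReal.toReal_mono hABfin.ne (h2 ▸ measure_mono h1)) (by positivity)
  by_cases hB0 : volume B = 0
  · obtain ⟨b, hb⟩ := hBne
    have h1 : A + {b} ⊆ A + B := add_subset_add_left (singleton_subset_iff.2 hb)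
    have h2 : volume (A + {b}) = volume A := by
      rw [Set.add_singleton, Set.image_add_right, measure_preimage_add_right]
    rw [hB0]
    simp only [ENNReal.toReal_zero, Real.zero_rpow hd1, add_zero]
    exact Real.rpow_le_rpow ENNReal.toReal_nonneg
      (ENNReal.toReal_mono hABfin.ne (h2 ▸ measure_mono h1)) (by positivity)
  -- main case
  have hAfin : volume A ≠ ⊤ := hA.measure_lt_top.ne
  have hBfin : volume B ≠ ⊤ := hB.measure_lt_top.ne
  set vA := (volume A).toReal with hvA
  set vB := (volume B).toReal with hvB
  set V := (volume (A + B)).toReal with hV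
  have hvApos : 0 < vA := ENNReal.toReal_pos hA0 hAfin
  have hvBpos : 0 < vB := ENNReal.toReal_pos hB0 hBfin
  set P := vA ^ ((1:ℝ)/d) + vB ^ ((1:ℝ)/d) with hP
  have hPnn : (0:ℝ) ≤ P := by positivity
  have hdr : (1:ℝ)/d = ((d:ℝ))⁻¹ := one_div _
  suffices hsuff : P ^ d ≤ V by
    calc P = (P ^ d) ^ ((1:ℝ)/d) := by rw [hdr, Real.pow_rpow_inv_natCast hPnn hd.ne']
      _ ≤ V ^ ((1:ℝ)/d) := Real.rpow_le_rpow (by positivity) hsuff (by positivity)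
  refine le_of_forall_pos_le_add fun ε hε => ?_
  -- outer regularity
  obtain ⟨U, hUsub, hUopen, hUlt⟩ := (A + B).exists_isOpen_lt_of_lt
    (volume (A + B) + ENNReal.ofReal ε)
    (ENNReal.lt_add_right hABfin.ne (ENNReal.ofReal_pos.2 hε).ne')
  have hUfin : volume U ≠ ⊤ :=
    (hUlt.trans (ENNReal.add_lt_top.2 ⟨hABfin, ENNReal.ofReal_lt_top⟩)).ne
  obtain ⟨δ, hδpos, hδsub⟩ := hABc.exists_thickening_subset_open hUopen hUsub
  have hrpos : 0 < δ/2 := by positivity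
  obtain ⟨𝒜₀, hAsub, hAthick⟩ := compact_cover hA hrpos
  obtain ⟨ℬ₀, hBsub, hBthick⟩ := compact_cover hB hrpos
  have hposA : 0 < volume (famSet 𝒜₀) :=
    lt_of_lt_of_le (pos_iff_ne_zero.2 hA0) (measure_mono hAsub)
  have hposB : 0 < volume (famSet ℬ₀) :=
    lt_of_lt_of_le (pos_iff_ne_zero.2 hB0) (measure_mono hBsub)
  obtain ⟨𝒜', hgoodA, hsubA, hvolA⟩ := grid_decomp 𝒜₀ hposA
  obtain ⟨ℬ', hgoodB, hsubB, hvolB⟩ := grid_decomp ℬ₀ hposB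
  have hkey := key hd (𝒜'.card + ℬ'.card) 𝒜' ℬ' le_rfl hgoodA hgoodB
  have hsumsub : famSet 𝒜' + famSet ℬ' ⊆ U := by
    refine (add_subset_add (hsubA.trans hAthick) (hsubB.trans hBthick)).trans ?_
    refine (thick_add hrpos).trans ?_
    rw [show 2 * (δ/2) = δ by ring]
    exact hδsub
  -- assemble real inequalities
  have hvolU : (volume U).toReal ≤ V + ε := by
    have := ENNReal.toReal_mono (by
        exact ENNReal.add_ne_top.2 ⟨hABfin.ne, ENNReal.ofReal_ne_top⟩) hUlt.le
    rwa [ENNReal.toReal_add hABfin.ne ENNReal.ofReal_ne_top,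
      ENNReal.toReal_ofReal hε.le] at this
  have hAle : vA ≤ (volume (famSet 𝒜')).toReal := by
    rw [hvolA]
    exact ENNReal.toReal_mono (volume_famSet_lt_top 𝒜₀).ne (measure_mono hAsub)
  have hBle : vB ≤ (volume (famSet ℬ')).toReal := by
    rw [hvolB]
    exact ENNReal.toReal_mono (volume_famSet_lt_top ℬ₀).ne (measure_mono hBsub)
  have hsumle : (volume (famSet 𝒜' + famSet ℬ')).toReal ≤ (volume U).toReal :=
    ENNReal.toReal_mono hUfin (measure_mono hsumsub)
  have hchain : P ≤ ((volume U).toReal) ^ ((1:ℝ)/d) := by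
    calc P ≤ (volume (famSet 𝒜')).toReal ^ ((1:ℝ)/d)
          + (volume (famSet ℬ')).toReal ^ ((1:ℝ)/d) :=
        add_le_add (Real.rpow_le_rpow hvApos.le hAle (by positivity))
          (Real.rpow_le_rpow hvBpos.le hBle (by positivity))
      _ ≤ (volume (famSet 𝒜' + famSet ℬ')).toReal ^ ((1:ℝ)/d) := hkey
      _ ≤ ((volume U).toReal) ^ ((1:ℝ)/d) :=
        Real.rpow_le_rpow ENNReal.toReal_nonneg hsumle (by positivity)
  calc P ^ d ≤ (((volume U).toReal) ^ ((1:ℝ)/d)) ^ d := pow_le_pow_left₀ hPnn hchain d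
    _ = (volume U).toReal := by
        rw [hdr, Real.rpow_inv_natCast_pow ENNReal.toReal_nonneg hd.ne']
    _ ≤ V + ε := hvolU

end BM

theorem euclidean_BM (d : ℕ) (hd : 0 < d) (A B : Set (EuclideanSpace ℝ (Fin d)))
    (hA : IsCompact A) (hB : IsCompact B) (hAne : A.Nonempty) (hBne : B.Nonempty) :
    (volume A).toReal ^ ((1 : ℝ) / d) + (volume B).toReal ^ ((1 : ℝ) / d) ≤
      (volume (A + B)).toReal ^ ((1 : ℝ) / d) := by
  -- transfer everything to the pi space `Fin d → ℝ`
  have hpre : ∀ S : Set (EuclideanSpace ℝ (Fin d)), MeasurableSet S →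
      volume (WithLp.toLp 2 ⁻¹' S : Set (Fin d → ℝ)) = volume S := fun S hS =>
    (PiLp.volume_preserving_toLp (Fin d)).measure_preimage hS.nullMeasurableSet
  have himg : ∀ S : Set (EuclideanSpace ℝ (Fin d)),
      (WithLp.toLp 2 ⁻¹' S : Set (Fin d → ℝ)) = WithLp.ofLp '' S := by
    intro S; ext x; constructor
    · intro hx; exact ⟨_, hx, rfl⟩
    · rintro ⟨y, hy, rfl⟩; simpa using hy
  have hcomp : ∀ S : Set (EuclideanSpace ℝ (Fin d)), IsCompact S →
      IsCompact (WithLp.toLp 2 ⁻¹' S : Set (Fin d → ℝ)) := fun S hS => by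
    rw [himg]; exact hS.image (PiLp.continuous_ofLp 2 _)
  have hadd : (WithLp.toLp 2 ⁻¹' (A + B) : Set (Fin d → ℝ)) =
      WithLp.toLp 2 ⁻¹' A + WithLp.toLp 2 ⁻¹' B := by
    ext x; simp only [Set.mem_preimage, Set.mem_add]; constructor
    · rintro ⟨a, ha, b, hb, hab⟩
      exact ⟨WithLp.ofLp a, by simpa using ha, WithLp.ofLp b, by simpa using hb,
        by rw [← WithLp.ofLp_add, hab]⟩
    · rintro ⟨a, ha, b, hb, rfl⟩
      exact ⟨WithLp.toLp 2 a, ha, WithLp.toLp 2 b, hb, by simp⟩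
  obtain ⟨a, ha⟩ := hAne
  obtain ⟨b, hb⟩ := hBne
  have := BM.pi_BM hd (WithLp.toLp 2 ⁻¹' A) (WithLp.toLp 2 ⁻¹' B) (hcomp A hA) (hcomp B hB)
    ⟨WithLp.ofLp a, by simpa using ha⟩ ⟨WithLp.ofLp b, by simpa using hb⟩
  rwa [← hadd, hpre A hA.measurableSet, hpre B hB.measurableSet,
    hpre (A + B) (hA.add hB).measurableSet] at this

/-- Brunn–Minkowski: for nonempty compact A, B ⊆ ℝ^d,
λ(A+B)^{1/d} ≥ λ(A)^{1/d} + λ(B)^{1/d}. -/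
theorem stmt_3 (d : ℕ) (hd : 0 < d) (A B : Set (EuclideanSpace ℝ (Fin d)))
    (hA : IsCompact A) (hB : IsCompact B) (hAne : A.Nonempty) (hBne : B.Nonempty) :
    (volume A).toReal ^ ((1 : ℝ) / d) + (volume B).toReal ^ ((1 : ℝ) / d) ≤
      (volume (A + B)).toReal ^ ((1 : ℝ) / d) := by
  exact euclidean_BM d hd A B hA hB hAne hBne
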